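/- There exists a tournament on 8 vertices whose vertex set cannot be partitioned into two disjoint 4-stars. -/

import Mathlib

set_option maxRecDepth 100000


/-- A tournament on Fin n: the relation is asymmetric and total on distinct pairs. -/
def IsTournament {n : ℕ} (r : Fin n → Fin n → Prop) : Prop :=
  (∀ u v : Fin n, r u v → ¬ r v u) ∧ (∀ u v : Fin n, u ≠ v → r u v ∨ r v u)

/-- An m-star: an m-element vertex set with a center dominating all other members. -/
def IsMStar {n : ℕ} (r : Fin n → Fin n → Prop) (m : ℕ) (S : Finset (Fin n)) : Prop :=
  S.card = m ∧ ∃ c ∈ S, ∀ v ∈ S, v ≠ c → r c v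

/-- An m-star-factor: a partition of the vertex set into pairwise disjoint m-stars. -/
def HasStarFactor {n : ℕ} (r : Fin n → Fin n → Prop) (m : ℕ) : Prop :=
  ∃ P : Finset (Finset (Fin n)), (∀ S ∈ P, IsMStar r m S) ∧
    (P : Set (Finset (Fin n))).PairwiseDisjoint id ∧ P.biUnion id = Finset.univ

def M : Fin 8 → Fin 8 → Bool :=
  !![false, true, false, true, true, false, true, false;
  false, false, true, true, false, false, false, true;
  true, false, false, true, false, true, false, false;
  false, false, false, false, true, true, false, true;
  false, true, true, false, false, true, true, false;
  true, true, false, false, false, false, true, true;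
  false, true, true, true, false, false, false, false;
  true, false, true, false, true, false, true, false]

theorem eight_vertex_no_two_four_stars :
    ∃ r : Fin 8 → Fin 8 → Prop, IsTournament r ∧
      ¬ ∃ S₁ S₂ : Finset (Fin 8), IsMStar r 4 S₁ ∧ IsMStar r 4 S₂ ∧
          Disjoint S₁ S₂ ∧ S₁ ∪ S₂ = Finset.univ := by
  refine ⟨fun u v => M u v = true, ⟨?_, ?_⟩, ?_⟩
  · decide
  · decide
  · simp only [IsMStar]
    decide
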